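/- arXiv:1104.4415 — 3 statements merged into one kernel-verified Lean document; each statement's English description precedes it below -/
import Mathlib

section
/- Let d ≥ 1 and let G = (V, E) be a d-sparse finite graph. If H₁ = (U₁, F₁) and H₂ = (U₂, F₂) are distinct d-critical components of G, then |U₁ ∩ U₂| ≤ d − 1, and if |U₁ ∩ U₂| = d − 1 then i_G(U₁ ∩ U₂) = binom(d−1, 2), i.e. U₁ ∩ U₂ induces a complete subgraph of G. -/
open Finset
open scoped Classical

variable {α : Type*} [DecidableEq α]

/-- The set of edges of `E` with both endpoints in `X`. -/
noncomputable def inducedEdges (E : Finset (Sym2 α)) (X : Finset α) : Finset (Sym2 α) :=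
  E.filter fun e => ∀ v ∈ e, v ∈ X

/-- `i_G(X)`: the number of edges of `E` with both endpoints in `X`. -/
noncomputable def iG (E : Finset (Sym2 α)) (X : Finset α) : ℕ :=
  (inducedEdges E X).card

/-- `E` is a valid edge set on the vertex set `V`: edges are loopless and join vertices of `V`. -/
def ValidOn (V : Finset α) (E : Finset (Sym2 α)) : Prop :=
  ∀ e ∈ E, ¬ e.IsDiag ∧ ∀ v ∈ e, v ∈ V

/-- The graph `(V, E)` is `d`-sparse: every `X ⊆ V` with `|X| ≥ d` satisfies
`i(X) ≤ d|X| - (d+1 choose 2)`. -/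
noncomputable def Sparse (d : ℕ) (V : Finset α) (E : Finset (Sym2 α)) : Prop :=
  ∀ X ⊆ V, d ≤ X.card → iG E X + Nat.choose (d + 1) 2 ≤ d * X.card

/-- `(U, F)` is a subgraph of `(V, E)`. -/
def IsSubgraph (V : Finset α) (E : Finset (Sym2 α)) (U : Finset α) (F : Finset (Sym2 α)) :
    Prop :=
  U ⊆ V ∧ F ⊆ E ∧ ∀ e ∈ F, ∀ v ∈ e, v ∈ U

/-- The graph `(U, F)` is `d`-critical: either `|U| = 2` and `|F| = 1`, or `|U| ≥ d + 2` and
`|F| = d|U| - (d+1 choose 2)`. -/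
def Critical (d : ℕ) (U : Finset α) (F : Finset (Sym2 α)) : Prop :=
  (U.card = 2 ∧ F.card = 1) ∨
  (d + 2 ≤ U.card ∧ F.card + Nat.choose (d + 1) 2 = d * U.card)

/-- `(U, F)` is a `d`-critical subgraph of `(V, E)`. -/
def CritSubgraph (d : ℕ) (V : Finset α) (E : Finset (Sym2 α)) (U : Finset α)
    (F : Finset (Sym2 α)) : Prop :=
  IsSubgraph V E U F ∧ Critical d U F

/-- `(U, F)` is a `d`-critical component of `(V, E)`: a `d`-critical subgraph not properly
contained in any other `d`-critical subgraph. -/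
def CritComponent (d : ℕ) (V : Finset α) (E : Finset (Sym2 α)) (U : Finset α)
    (F : Finset (Sym2 α)) : Prop :=
  CritSubgraph d V E U F ∧
  ∀ U' F', CritSubgraph d V E U' F' → U ⊆ U' → F ⊆ F' → U = U' ∧ F = F'

/-- The `d`-critical cover of `(V, E)`: the family of vertex sets of its `d`-critical
components. -/
noncomputable def critCover (d : ℕ) (V : Finset α) (E : Finset (Sym2 α)) :
    Finset (Finset α) :=
  V.powerset.filter fun U => ∃ F, CritComponent d V E U F

/-- `d_𝒳(W)`: the number of members of the family `𝒳` containing `W`. -/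
def degX (𝒳 : Finset (Finset α)) (W : Finset α) : ℕ :=
  (𝒳.filter fun X => W ⊆ X).card

/-- `Θ_k(𝒳)`: the set of `k`-hinges of `𝒳`, i.e. `k`-element subsets of `V` lying in at least
two members of `𝒳`.  (For `k = 0` this is `{∅}` exactly when `|𝒳| ≥ 2`.) -/
noncomputable def theta (V : Finset α) (𝒳 : Finset (Finset α)) (k : ℕ) :
    Finset (Finset α) :=
  V.powerset.filter fun W => W.card = k ∧ 2 ≤ degX 𝒳 W

/-- `𝒳` is a cover of `(V, E)`: every member has at least two vertices and every edge is
induced by some member. -/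
def IsCover (E : Finset (Sym2 α)) (𝒳 : Finset (Finset α)) : Prop :=
  (∀ X ∈ 𝒳, 2 ≤ X.card) ∧ ∀ e ∈ E, ∃ X ∈ 𝒳, ∀ v ∈ e, v ∈ X

/-- `𝒳` is `t`-thin: any two distinct members intersect in at most `t` vertices. -/
def Thin (t : ℕ) (𝒳 : Finset (Finset α)) : Prop :=
  ∀ X ∈ 𝒳, ∀ Y ∈ 𝒳, X ≠ Y → (X ∩ Y).card ≤ t

/-- `(V, F)` is a maximal `d`-sparse (spanning) subgraph of `(V, E)`. -/
noncomputable def MaxSparse (d : ℕ) (V : Finset α) (E F : Finset (Sym2 α)) : Prop :=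
  F ⊆ E ∧ Sparse d V F ∧ ∀ e ∈ E, e ∉ F → ¬ Sparse d V (insert e F)

section Aux

lemma two_mul_choose_two (n : ℕ) : 2 * Nat.choose n 2 = n * (n - 1) := by
  induction n with
  | zero => rfl
  | succ m ih =>
    rw [Nat.choose_succ_succ, Nat.choose_one_right, Nat.mul_add, ih, Nat.add_sub_cancel]
    cases m with
    | zero => rfl
    | succ k =>
      rw [Nat.add_sub_cancel]
      ring

lemma inducedEdges_mono (E : Finset (Sym2 α)) {X Y : Finset α} (h : X ⊆ Y) :
    inducedEdges E X ⊆ inducedEdges E Y := by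
  intro e he
  simp only [inducedEdges, mem_filter] at he ⊢
  exact ⟨he.1, fun v hv => h (he.2 v hv)⟩

lemma subgraph_edges_subset {V : Finset α} {E : Finset (Sym2 α)} {U : Finset α}
    {F : Finset (Sym2 α)} (h : IsSubgraph V E U F) : F ⊆ inducedEdges E U := by
  intro e he
  simp only [inducedEdges, mem_filter]
  exact ⟨h.2.1 he, h.2.2 e he⟩

lemma iG_le_choose {V : Finset α} {E : Finset (Sym2 α)} (hval : ValidOn V E) (X : Finset α) :
    iG E X ≤ Nat.choose X.card 2 := by
  classical
  have hsub : inducedEdges E X ⊆ X.sym2.filter (fun e => ¬ e.IsDiag) := by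
    intro e he
    simp only [inducedEdges, mem_filter] at he ⊢
    exact ⟨Finset.mem_sym2_iff.2 he.2, (hval e he.1).1⟩
  have hdiag : X.sym2.filter (fun e => e.IsDiag) = X.image Sym2.diag := by
    ext e
    simp only [mem_filter, Finset.mem_sym2_iff, mem_image]
    constructor
    · rintro ⟨hmem, hd⟩
      obtain ⟨a, rfl⟩ : ∃ a, Sym2.diag a = e := ⟨e.diagElem hd, Sym2.diag_diagElem hd⟩
      exact ⟨a, hmem a (Sym2.mem_mk_left a a), rfl⟩
    · rintro ⟨a, ha, rfl⟩
      refine ⟨fun b hb => ?_, Sym2.diag_isDiag a⟩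
      have : b = a ∨ b = a := Sym2.mem_iff.1 hb
      rcases this with rfl | rfl <;> exact ha
  have hcard1 : (X.sym2.filter fun e => e.IsDiag).card = X.card := by
    rw [hdiag]
    exact card_image_of_injective X Sym2.diag_injective
  have hsplit : (X.sym2.filter fun e => e.IsDiag).card
      + (X.sym2.filter fun e => ¬ e.IsDiag).card = X.sym2.card :=
    Finset.card_filter_add_card_filter_not _
  have hs2 : X.sym2.card = Nat.choose (X.card + 1) 2 := Finset.card_sym2 X
  have hch : Nat.choose (X.card + 1) 2 = X.card + Nat.choose X.card 2 := by
    rw [Nat.choose_succ_succ, Nat.choose_one_right]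
  have hle := card_le_card hsub
  unfold iG
  omega

lemma critF_eq {d : ℕ} (hd : 1 ≤ d) {V : Finset α} {E : Finset (Sym2 α)}
    (hval : ValidOn V E) (hsp : Sparse d V E) {U : Finset α} {F : Finset (Sym2 α)}
    (h : CritSubgraph d V E U F) : F = inducedEdges E U := by
  obtain ⟨⟨hUV, hFE, hFU⟩, hc⟩ := h
  have hFind : F ⊆ inducedEdges E U := subgraph_edges_subset ⟨hUV, hFE, hFU⟩
  rcases hc with ⟨hU2, hF1⟩ | ⟨hUb, hFb⟩
  · obtain ⟨a, b, hab, rfl⟩ := Finset.card_eq_two.1 hU2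
    refine Finset.eq_of_subset_of_card_le hFind ?_
    have hsub1 : inducedEdges E {a, b} ⊆ {s(a, b)} := by
      intro e he
      simp only [inducedEdges, mem_filter] at he
      rw [mem_singleton]
      induction e using Sym2.ind with
      | _ x y =>
        have hnd := (hval _ he.1).1
        rw [Sym2.mk_isDiag_iff] at hnd
        have hx := he.2 x (Sym2.mem_mk_left x y)
        have hy := he.2 y (Sym2.mem_mk_right x y)
        simp only [mem_insert, mem_singleton] at hx hy
        rcases hx with rfl | rfl <;> rcases hy with rfl | rfl
        · exact absurd rfl hnd
        · rfl
        · exact Sym2.eq_swap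
        · exact absurd rfl hnd
    calc (inducedEdges E {a, b}).card ≤ ({s(a, b)} : Finset (Sym2 α)).card :=
          card_le_card hsub1
      _ = 1 := card_singleton _
      _ = F.card := hF1.symm
  · refine Finset.eq_of_subset_of_card_le hFind ?_
    have h1 : iG E U + Nat.choose (d + 1) 2 ≤ d * U.card := hsp U hUV (by omega)
    unfold iG at h1
    generalize d * U.card = M at h1 hFb
    omega

lemma crit_formula {d : ℕ} (hd : 1 ≤ d) {U : Finset α} {F : Finset (Sym2 α)}
    (h : Critical d U F) (hside : d ≤ 2 ∨ d + 2 ≤ U.card) :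
    F.card + Nat.choose (d + 1) 2 = d * U.card := by
  rcases h with ⟨hU, hF⟩ | ⟨_, hF⟩
  · have hd2 : d ≤ 2 := by
      rcases hside with h | h
      · exact h
      · omega
    interval_cases d <;> rw [hF, hU] <;> rfl
  · exact hF

lemma cont {d : ℕ} (hd : 1 ≤ d) {V : Finset α} {E : Finset (Sym2 α)}
    (hval : ValidOn V E) (hsp : Sparse d V E)
    {U₁ U₂ : Finset α} {F₁ F₂ : Finset (Sym2 α)}
    (h₁sub : CritSubgraph d V E U₁ F₁) (h₂ : CritComponent d V E U₂ F₂)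
    (hsub : U₂ ⊆ U₁) : U₂ = U₁ ∧ F₂ = F₁ := by
  have hF₂ : F₂ = inducedEdges E U₂ := critF_eq hd hval hsp h₂.1
  have hF₁ : F₁ = inducedEdges E U₁ := critF_eq hd hval hsp h₁sub
  have hFsub : F₂ ⊆ F₁ := by
    rw [hF₁, hF₂]
    exact inducedEdges_mono E hsub
  exact h₂.2 U₁ F₁ h₁sub hsub hFsub

lemma aux_union {d : ℕ} (hd : 1 ≤ d) {V : Finset α} {E : Finset (Sym2 α)}
    (hval : ValidOn V E) (hsp : Sparse d V E)
    {U₁ U₂ : Finset α} {F₁ F₂ : Finset (Sym2 α)}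
    (h₁ : CritComponent d V E U₁ F₁) (h₂ : CritComponent d V E U₂ F₂)
    (hne : (U₁, F₁) ≠ (U₂, F₂))
    (hf₁ : F₁.card + Nat.choose (d + 1) 2 = d * U₁.card)
    (hf₂ : F₂.card + Nat.choose (d + 1) 2 = d * U₂.card)
    (hub : d + 2 ≤ (U₁ ∪ U₂).card)
    (hcap : (F₁ ∩ F₂).card + Nat.choose (d + 1) 2 ≤ d * (U₁ ∩ U₂).card) : False := by
  obtain ⟨⟨⟨hU₁V, hF₁E, hF₁U⟩, hc₁⟩, hmax₁⟩ := h₁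
  obtain ⟨⟨⟨hU₂V, hF₂E, hF₂U⟩, hc₂⟩, hmax₂⟩ := h₂
  have hUV : U₁ ∪ U₂ ⊆ V := union_subset hU₁V hU₂V
  have hFsub : F₁ ∪ F₂ ⊆ inducedEdges E (U₁ ∪ U₂) := by
    intro e he
    simp only [inducedEdges, mem_filter]
    rcases mem_union.1 he with h | h
    · exact ⟨hF₁E h, fun v hv => mem_union_left _ (hF₁U e h v hv)⟩
    · exact ⟨hF₂E h, fun v hv => mem_union_right _ (hF₂U e h v hv)⟩
  have hsp' : (F₁ ∪ F₂).card + Nat.choose (d + 1) 2 ≤ d * (U₁ ∪ U₂).card := by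
    have h1 := hsp (U₁ ∪ U₂) hUV (by omega)
    have h2 : (F₁ ∪ F₂).card ≤ iG E (U₁ ∪ U₂) := card_le_card hFsub
    omega
  have hcards : (U₁ ∪ U₂).card + (U₁ ∩ U₂).card = U₁.card + U₂.card :=
    card_union_add_card_inter U₁ U₂
  have hfcards : (F₁ ∪ F₂).card + (F₁ ∩ F₂).card = F₁.card + F₂.card :=
    card_union_add_card_inter F₁ F₂
  have hmul : d * (U₁ ∪ U₂).card + d * (U₁ ∩ U₂).card = d * U₁.card + d * U₂.card := by
    rw [← Nat.mul_add, ← Nat.mul_add, hcards]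
  have htight : (F₁ ∪ F₂).card + Nat.choose (d + 1) 2 = d * (U₁ ∪ U₂).card := by
    generalize d * (U₁ ∪ U₂).card = M at hsp' hmul ⊢
    generalize d * (U₁ ∩ U₂).card = K at hcap hmul
    generalize d * U₁.card = P at hf₁ hmul
    generalize d * U₂.card = Q at hf₂ hmul
    omega
  have hcritU : CritSubgraph d V E (U₁ ∪ U₂) (F₁ ∪ F₂) := by
    refine ⟨⟨hUV, union_subset hF₁E hF₂E, fun e he v hv => ?_⟩, Or.inr ⟨hub, htight⟩⟩
    rcases mem_union.1 he with h | h
    · exact mem_union_left _ (hF₁U e h v hv)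
    · exact mem_union_right _ (hF₂U e h v hv)
  obtain ⟨hU1eq, _⟩ := hmax₁ _ _ hcritU subset_union_left subset_union_left
  have hsub : U₂ ⊆ U₁ := by
    rw [hU1eq]
    exact subset_union_right
  obtain ⟨he1, he2⟩ := cont hd hval hsp ⟨⟨hU₁V, hF₁E, hF₁U⟩, hc₁⟩
    ⟨⟨⟨hU₂V, hF₂E, hF₂U⟩, hc₂⟩, hmax₂⟩ hsub
  exact hne (by rw [he1, he2])

end Aux

/-- Distinct `d`-critical components of a `d`-sparse graph intersect in at most
`d - 1` vertices, and if they intersect in exactly `d - 1` vertices then the intersection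
induces a complete subgraph (`binom(d-1, 2)` edges) of `G`. -/
theorem stmt0 (d : ℕ) (hd : 1 ≤ d) (V : Finset α) (E : Finset (Sym2 α))
    (hval : ValidOn V E) (hsp : Sparse d V E)
    (U₁ U₂ : Finset α) (F₁ F₂ : Finset (Sym2 α))
    (h₁ : CritComponent d V E U₁ F₁) (h₂ : CritComponent d V E U₂ F₂)
    (hne : (U₁, F₁) ≠ (U₂, F₂)) :
    (U₁ ∩ U₂).card ≤ d - 1 ∧
      ((U₁ ∩ U₂).card = d - 1 → iG E (U₁ ∩ U₂) = Nat.choose (d - 1) 2) := by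
  have hnc21 : ¬ U₂ ⊆ U₁ := by
    intro hs
    obtain ⟨e1, e2⟩ := cont hd hval hsp h₁.1 h₂ hs
    exact hne (by rw [e1, e2])
  have hnc12 : ¬ U₁ ⊆ U₂ := by
    intro hs
    obtain ⟨e1, e2⟩ := cont hd hval hsp h₂.1 h₁ hs
    exact hne (by rw [e1, e2])
  have hproper1 : (U₁ ∩ U₂).card < U₁.card :=
    card_lt_card (Finset.ssubset_iff_subset_ne.2
      ⟨inter_subset_left, fun h => hnc12 (Finset.inter_eq_left.1 h)⟩)
  have hproper2 : (U₁ ∩ U₂).card < U₂.card :=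
    card_lt_card (Finset.ssubset_iff_subset_ne.2
      ⟨inter_subset_right, fun h => hnc21 (Finset.inter_eq_right.1 h)⟩)
  have hu1lt : U₁.card < (U₁ ∪ U₂).card :=
    card_lt_card (Finset.ssubset_iff_subset_ne.2
      ⟨subset_union_left, fun h => hnc21 (by rw [h]; exact subset_union_right)⟩)
  have hcapsub : F₁ ∩ F₂ ⊆ inducedEdges E (U₁ ∩ U₂) := by
    intro e he
    simp only [inducedEdges, mem_filter]
    have he1 := (mem_inter.1 he).1
    have he2 := (mem_inter.1 he).2
    exact ⟨h₁.1.1.2.1 he1, fun v hv =>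
      mem_inter.2 ⟨h₁.1.1.2.2 e he1 v hv, h₂.1.1.2.2 e he2 v hv⟩⟩
  have hcaple : (F₁ ∩ F₂).card ≤ iG E (U₁ ∩ U₂) := card_le_card hcapsub
  have hIV : U₁ ∩ U₂ ⊆ V := inter_subset_left.trans h₁.1.1.1
  have part1 : (U₁ ∩ U₂).card ≤ d - 1 := by
    by_contra hge
    have hk : d ≤ (U₁ ∩ U₂).card := by omega
    have hs₁ : d ≤ 2 ∨ d + 2 ≤ U₁.card := by
      rcases h₁.1.2 with ⟨hU, _⟩ | ⟨hb, _⟩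
      · left; omega
      · right; exact hb
    have hs₂ : d ≤ 2 ∨ d + 2 ≤ U₂.card := by
      rcases h₂.1.2 with ⟨hU, _⟩ | ⟨hb, _⟩
      · left; omega
      · right; exact hb
    have hf₁ := crit_formula hd h₁.1.2 hs₁
    have hf₂ := crit_formula hd h₂.1.2 hs₂
    have hub : d + 2 ≤ (U₁ ∪ U₂).card := by
      have h1 : d + 1 ≤ U₁.card := by
        rcases h₁.1.2 with ⟨hU, _⟩ | ⟨hb, _⟩ <;> omega
      omega
    have hcap : (F₁ ∩ F₂).card + Nat.choose (d + 1) 2 ≤ d * (U₁ ∩ U₂).card := by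
      have hspI := hsp (U₁ ∩ U₂) hIV hk
      generalize d * (U₁ ∩ U₂).card = K at hspI ⊢
      omega
    exact aux_union hd hval hsp h₁ h₂ hne hf₁ hf₂ hub hcap
  refine ⟨part1, fun hk => ?_⟩
  have hle := iG_le_choose hval (U₁ ∩ U₂)
  rw [hk] at hle
  by_cases hd2 : d ≤ 2
  · have h0 : Nat.choose (d - 1) 2 = 0 := by
      interval_cases d <;> rfl
    omega
  · push_neg at hd2
    by_contra hne2
    have hlt : iG E (U₁ ∩ U₂) + 1 ≤ Nat.choose (d - 1) 2 := by omega
    have hs₁ : d ≤ 2 ∨ d + 2 ≤ U₁.card := by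
      rcases h₁.1.2 with ⟨hU, _⟩ | ⟨hb, _⟩
      · left; omega
      · right; exact hb
    have hs₂ : d ≤ 2 ∨ d + 2 ≤ U₂.card := by
      rcases h₂.1.2 with ⟨hU, _⟩ | ⟨hb, _⟩
      · left; omega
      · right; exact hb
    have hf₁ := crit_formula hd h₁.1.2 hs₁
    have hf₂ := crit_formula hd h₂.1.2 hs₂
    have hub : d + 2 ≤ (U₁ ∪ U₂).card := by
      have h1 : d + 1 ≤ U₁.card := by
        rcases h₁.1.2 with ⟨hU, _⟩ | ⟨hb, _⟩ <;> omega
      omega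
    have hprod : (d + 1) * d + (d - 1) * (d - 2) = 2 * (d * (d - 1)) + 2 := by
      obtain ⟨e, rfl⟩ : ∃ e, d = e + 3 := ⟨d - 3, by omega⟩
      simp only [show e + 3 - 1 = e + 2 from rfl, show e + 3 - 2 = e + 1 from rfl]
      ring
    have hCid : Nat.choose (d + 1) 2 + Nat.choose (d - 1) 2 = d * (d - 1) + 1 := by
      have h1 := two_mul_choose_two (d + 1)
      have h2 := two_mul_choose_two (d - 1)
      rw [Nat.add_sub_cancel] at h1
      have hsub2 : d - 1 - 1 = d - 2 := by omega
      rw [hsub2] at h2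
      generalize (d + 1) * d = X at h1 hprod
      generalize (d - 1) * (d - 2) = Y at h2 hprod
      generalize d * (d - 1) = Z at hprod ⊢
      omega
    have hcap : (F₁ ∩ F₂).card + Nat.choose (d + 1) 2 ≤ d * (U₁ ∩ U₂).card := by
      rw [hk]
      generalize d * (d - 1) = P at hCid ⊢
      omega
    exact aux_union hd hval hsp h₁ h₂ hne hf₁ hf₂ hub hcap
end

section
/- Let d ≥ 1, let H = (V, E) be a d-sparse finite graph with d-critical cover 𝒳, let W ∈ Θ_k(𝒳) for some 0 ≤ k ≤ d − 1, let t = d_𝒳(W), let H₁ = (V₁, E₁), …, H_t = (V_t, E_t) be the d-critical components of H whose vertex sets contain W, and suppose each of these has at least d + 2 vertices. Let V' = V₁ ∪ ⋯ ∪ V_t. Then |V'| = Σ_{i=1}^t |V_i| − k(t − 1) − Σ_{U ∈ Θ_{k+1}(𝒳), W ⊂ U} (d_𝒳(U) − 1). -/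
open Finset
open scoped Classical

variable {α : Type*} [DecidableEq α]

/-- counting the vertices of the union of the critical components containing a
fixed hinge `W` (equation (1) of the paper). -/
theorem stmt4 (d k : ℕ) (hd : 1 ≤ d) (hk : k ≤ d - 1)
    (V : Finset α) (E : Finset (Sym2 α)) (hval : ValidOn V E) (hsp : Sparse d V E)
    (𝒳 : Finset (Finset α)) (h𝒳 : 𝒳 = critCover d V E)
    (W : Finset α) (hW : W ∈ theta V 𝒳 k)
    (hbig : ∀ U F, CritComponent d V E U F → W ⊆ U → d + 2 ≤ U.card)
    (t : ℕ) (ht : t = degX 𝒳 W) :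
    (((𝒳.filter fun X => W ⊆ X).biUnion id).card : ℤ) =
      (∑ X ∈ 𝒳.filter (fun X => W ⊆ X), (X.card : ℤ)) - k * ((t : ℤ) - 1) -
        ∑ U ∈ (theta V 𝒳 (k + 1)).filter (fun X => W ⊂ X), ((degX 𝒳 U : ℤ) - 1) := by
  classical
  simp only [theta, Finset.mem_filter, Finset.mem_powerset] at hW
  obtain ⟨hWV, hWk, hWdeg⟩ := hW
  set 𝒴 : Finset (Finset α) := 𝒳.filter fun X => W ⊆ X with h𝒴
  set S : Finset α := 𝒴.biUnion id with hSdef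
  set m : α → ℕ := fun v => (𝒴.filter fun X => v ∈ X).card with hmdef
  have ht' : t = 𝒴.card := ht
  have hcard𝒴 : 2 ≤ 𝒴.card := hWdeg
  have hXS : ∀ X ∈ 𝒴, X ⊆ S := fun X hX => Finset.subset_biUnion_of_mem id hX
  have hWS : W ⊆ S := by
    obtain ⟨X, hX⟩ := Finset.card_pos.mp (by omega : 0 < 𝒴.card)
    exact (Finset.mem_filter.mp hX).2.trans (hXS X hX)
  have hSV : S ⊆ V := by
    intro v hv
    obtain ⟨X, hX, hvX⟩ := Finset.mem_biUnion.mp hv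
    have hX𝒳 : X ∈ 𝒳 := (Finset.mem_filter.mp hX).1
    rw [h𝒳] at hX𝒳
    exact Finset.mem_powerset.mp (Finset.mem_filter.mp hX𝒳).1 hvX
  have hmS : ∀ v ∈ S, 1 ≤ m v := by
    intro v hv
    obtain ⟨X, hX, hvX⟩ := Finset.mem_biUnion.mp hv
    exact Finset.card_pos.mpr ⟨X, Finset.mem_filter.mpr ⟨hX, hvX⟩⟩
  have hmW : ∀ v ∈ W, m v = t := by
    intro v hv
    have : 𝒴.filter (fun X => v ∈ X) = 𝒴 :=
      Finset.filter_true_of_mem fun X hX => (Finset.mem_filter.mp hX).2 hv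
    simp only [hmdef]
    rw [this, ht']
  have hdeg : ∀ v, v ∉ W → degX 𝒳 (insert v W) = m v := by
    intro v hv
    simp only [hmdef, h𝒴, degX, Finset.filter_filter]
    congr 1
    apply Finset.filter_congr
    intro X _
    simp [Finset.insert_subset_iff, and_comm]
  have key : ∑ X ∈ 𝒴, (X.card : ℤ) = ∑ v ∈ S, (m v : ℤ) := by
    have h1 : ∀ X ∈ 𝒴, (X.card : ℤ) = ∑ v ∈ S, (if v ∈ X then (1 : ℤ) else 0) := by
      intro X hX
      rw [Finset.sum_boole]
      congr 1
      rw [Finset.filter_mem_eq_inter, Finset.inter_eq_right.mpr (hXS X hX)]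
    calc ∑ X ∈ 𝒴, (X.card : ℤ)
        = ∑ X ∈ 𝒴, ∑ v ∈ S, (if v ∈ X then (1 : ℤ) else 0) := Finset.sum_congr rfl h1
      _ = ∑ v ∈ S, ∑ X ∈ 𝒴, (if v ∈ X then (1 : ℤ) else 0) := Finset.sum_comm
      _ = ∑ v ∈ S, (m v : ℤ) := by
          refine Finset.sum_congr rfl fun v _ => ?_
          rw [Finset.sum_boole]
  have hT : ∑ v ∈ S \ W, ((m v : ℤ) - 1)
      = ∑ U ∈ (theta V 𝒳 (k + 1)).filter (fun X => W ⊂ X), ((degX 𝒳 U : ℤ) - 1) := by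
    rw [← Finset.sum_filter_of_ne (p := fun v => 2 ≤ m v)
      (fun x hx hne => by
        have h1 := hmS x (Finset.mem_sdiff.mp hx).1
        by_contra h
        push_neg at h
        have : m x = 1 := by omega
        simp [this] at hne)]
    refine Finset.sum_bij (fun v _ => insert v W) ?_ ?_ ?_ ?_
    · intro v hv
      rw [Finset.mem_filter] at hv
      obtain ⟨hvSW, hm2⟩ := hv
      rw [Finset.mem_sdiff] at hvSW
      obtain ⟨hvS, hvW⟩ := hvSW
      rw [Finset.mem_filter]
      refine ⟨?_, Finset.ssubset_insert hvW⟩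
      simp only [theta, Finset.mem_filter, Finset.mem_powerset]
      refine ⟨Finset.insert_subset (hSV hvS) hWV, ?_, ?_⟩
      · rw [Finset.card_insert_of_notMem hvW, hWk]
      · rw [hdeg v hvW]; exact hm2
    · intro v₁ hv₁ v₂ hv₂ heq
      have hv₁W : v₁ ∉ W := (Finset.mem_sdiff.mp (Finset.mem_filter.mp hv₁).1).2
      have hv₂W : v₂ ∉ W := (Finset.mem_sdiff.mp (Finset.mem_filter.mp hv₂).1).2
      have heq' : insert v₁ W = insert v₂ W := heq
      have : v₁ ∈ insert v₂ W := by
        rw [← heq']; exact Finset.mem_insert_self v₁ W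
      rcases Finset.mem_insert.mp this with h | h
      · exact h
      · exact absurd h hv₁W
    · intro U hU
      rw [Finset.mem_filter] at hU
      obtain ⟨hUtheta, hWU⟩ := hU
      simp only [theta, Finset.mem_filter, Finset.mem_powerset] at hUtheta
      obtain ⟨hUV, hUk, hUdeg⟩ := hUtheta
      obtain ⟨v, hvU, hvW⟩ := Finset.exists_of_ssubset hWU
      have hins : insert v W = U := by
        apply Finset.eq_of_subset_of_card_le
        · exact Finset.insert_subset hvU hWU.1
        · rw [Finset.card_insert_of_notMem hvW, hWk, hUk]
      have hvS : v ∈ S := by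
        have h0 : 0 < (𝒳.filter fun X => U ⊆ X).card :=
          Nat.lt_of_lt_of_le Nat.zero_lt_two hUdeg
        obtain ⟨X, hX⟩ := Finset.card_pos.mp h0
        rw [Finset.mem_filter] at hX
        have hX𝒴 : X ∈ 𝒴 := Finset.mem_filter.mpr ⟨hX.1, hWU.1.trans hX.2⟩
        exact Finset.mem_biUnion.mpr ⟨X, hX𝒴, hX.2 hvU⟩
      have hm2 : 2 ≤ m v := by
        rw [← hdeg v hvW, hins]; exact hUdeg
      exact ⟨v, Finset.mem_filter.mpr ⟨Finset.mem_sdiff.mpr ⟨hvS, hvW⟩, hm2⟩, hins⟩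
    · intro v hv
      have hvW : v ∉ W := (Finset.mem_sdiff.mp (Finset.mem_filter.mp hv).1).2
      rw [hdeg v hvW]
  have hWsum : ∑ v ∈ W, ((m v : ℤ) - 1) = (k : ℤ) * ((t : ℤ) - 1) := by
    rw [Finset.sum_congr rfl (fun v hv => by rw [hmW v hv] :
      ∀ v ∈ W, ((m v : ℤ) - 1) = ((t : ℤ) - 1))]
    rw [Finset.sum_const, hWk, nsmul_eq_mul]
  have hsplit := Finset.sum_sdiff (f := fun v => (m v : ℤ) - 1) hWS
  have hsum1 : ∑ v ∈ S, ((m v : ℤ) - 1) = (∑ v ∈ S, (m v : ℤ)) - S.card := by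
    rw [Finset.sum_sub_distrib, Finset.sum_const, nsmul_eq_mul, mul_one]
  linarith [key, hT, hWsum, hsplit, hsum1]
end

section
/- Let d ≥ 1, let H = (V, E) be a d-sparse finite graph with d-critical cover 𝒳, let W ∈ Θ_k(𝒳) for some 0 ≤ k ≤ d − 1, let t = d_𝒳(W), let H₁ = (V₁, E₁), …, H_t = (V_t, E_t) be the d-critical components of H whose vertex sets contain W, and suppose each of these has at least d + 2 vertices. Let E' = E₁ ∪ ⋯ ∪ E_t. Then |E'| ≥ Σ_{i=1}^t |E_i| − binom(k, 2)(t − 1) − k · Σ_{U ∈ Θ_{k+1}(𝒳), W ⊂ U} (d_𝒳(U) − 1) − Σ_{U ∈ Θ_{k+2}(𝒳), W ⊂ U} (d_𝒳(U) − 1). -/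
open Finset
open scoped Classical

variable {α : Type*} [DecidableEq α]

noncomputable def eFS : Sym2 α → Finset α :=
  Sym2.lift ⟨fun a b => {a, b}, fun a b => Finset.pair_comm a b⟩

@[simp] lemma eFS_mk (a b : α) : eFS s(a,b) = {a,b} := rfl

lemma mem_eFS {v : α} {e : Sym2 α} : v ∈ eFS e ↔ v ∈ e := by
  induction e using Sym2.ind with
  | _ a b => simp [Sym2.mem_iff]

lemma exists_rep_mixed {W : Finset α} (e : Sym2 α) (h1 : ¬ ∀ v ∈ e, v ∈ W)
    (h2 : ¬ ∀ v ∈ e, v ∉ W) : ∃ a b, a ∈ W ∧ b ∉ W ∧ e = s(a,b) := by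
  induction e using Sym2.ind with
  | _ x y =>
    push_neg at h1 h2
    obtain ⟨u, hu, huW⟩ := h1
    obtain ⟨w, hw, hwW⟩ := h2
    rw [Sym2.mem_iff] at hu hw
    rcases hu with h | h <;> rcases hw with h' | h'
    · exact absurd (by rw [h, ← h']; exact hwW) huW
    · exact ⟨w, u, hwW, huW, by rw [h, h']; exact Sym2.eq_swap⟩
    · exact ⟨w, u, hwW, huW, by rw [h, h']⟩
    · exact absurd (by rw [h, ← h']; exact hwW) huW

lemma pair_eq_sym2 {a b c d : α} (hab : a ≠ b) (h : ({a, b} : Finset α) = {c, d}) :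
    s(a,b) = s(c,d) := by
  have ha : a = c ∨ a = d := by
    have : a ∈ ({c,d} : Finset α) := h ▸ (by simp)
    simpa using this
  have hb : b = c ∨ b = d := by
    have : b ∈ ({c,d} : Finset α) := h ▸ (by simp)
    simpa using this
  rw [Sym2.eq_iff]
  rcases ha with ha|ha <;> rcases hb with hb|hb
  · exact absurd (ha.trans hb.symm) hab
  · exact Or.inl ⟨ha, hb⟩
  · exact Or.inr ⟨ha, hb⟩
  · exact absurd (ha.trans hb.symm) hab

/-- counting the edges of the union of the critical components containing a
fixed hinge `W` (inequality (2) of the paper).  Since critical components of a sparse graph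
are induced subgraphs, the edge set of the component with vertex set `X` is the set of edges
of `E` induced by `X`. -/
theorem stmt5 (d k : ℕ) (hd : 1 ≤ d) (hk : k ≤ d - 1)
    (V : Finset α) (E : Finset (Sym2 α)) (hval : ValidOn V E) (hsp : Sparse d V E)
    (𝒳 : Finset (Finset α)) (h𝒳 : 𝒳 = critCover d V E)
    (W : Finset α) (hW : W ∈ theta V 𝒳 k)
    (hbig : ∀ U F, CritComponent d V E U F → W ⊆ U → d + 2 ≤ U.card)
    (t : ℕ) (ht : t = degX 𝒳 W) :
    (((𝒳.filter fun X => W ⊆ X).biUnion (fun X => inducedEdges E X)).card : ℤ) ≥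
      (∑ X ∈ 𝒳.filter (fun X => W ⊆ X), (iG E X : ℤ)) -
        (Nat.choose k 2 : ℤ) * ((t : ℤ) - 1) -
        (k : ℤ) *
          (∑ U ∈ (theta V 𝒳 (k + 1)).filter (fun X => W ⊂ X), ((degX 𝒳 U : ℤ) - 1)) -
        ∑ U ∈ (theta V 𝒳 (k + 2)).filter (fun X => W ⊂ X), ((degX 𝒳 U : ℤ) - 1) := by
  classical
  simp only [theta, Finset.mem_filter, Finset.mem_powerset] at hW
  obtain ⟨hWV, hWcard, hWdeg⟩ := hW
  set S := 𝒳.filter (fun X => W ⊆ X) with hSdef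
  set ℰ := S.biUnion (fun X => inducedEdges E X) with hEdef
  set m : Sym2 α → ℕ := fun e => (S.filter fun X => e ∈ inducedEdges E X).card with hmdef
  have htS : t = S.card := ht
  -- every edge of ℰ is an edge of E
  have hEsub : ∀ e ∈ ℰ, e ∈ E := by
    intro e he
    rw [hEdef, Finset.mem_biUnion] at he
    obtain ⟨X, _, heX⟩ := he
    exact (Finset.mem_filter.mp heX).1
  have hm1 : ∀ e ∈ ℰ, 1 ≤ m e := by
    intro e he
    rw [hEdef, Finset.mem_biUnion] at he
    obtain ⟨X, hX, heX⟩ := he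
    exact Finset.card_pos.mpr ⟨X, Finset.mem_filter.mpr ⟨hX, heX⟩⟩
  -- double counting
  have hcount : ∑ X ∈ S, (iG E X : ℕ) = ∑ e ∈ ℰ, m e := by
    calc ∑ X ∈ S, iG E X
        = ∑ X ∈ S, ∑ e ∈ ℰ, (if e ∈ inducedEdges E X then 1 else 0) := by
          refine Finset.sum_congr rfl fun X hX => ?_
          rw [← Finset.card_filter, Finset.filter_mem_eq_inter,
            Finset.inter_eq_right.mpr (Finset.subset_biUnion_of_mem _ hX)]
          rfl
      _ = ∑ e ∈ ℰ, ∑ X ∈ S, (if e ∈ inducedEdges E X then 1 else 0) := Finset.sum_comm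
      _ = ∑ e ∈ ℰ, m e := by
          refine Finset.sum_congr rfl fun e _ => ?_
          rw [← Finset.card_filter]
  -- m e ≤ degX of the union
  have hmd : ∀ e ∈ ℰ, m e ≤ degX 𝒳 (W ∪ eFS e) := by
    intro e _
    refine Finset.card_le_card ?_
    intro X hX
    simp only [Finset.mem_filter, hSdef] at hX ⊢
    obtain ⟨⟨hX𝒳, hWX⟩, heX⟩ := hX
    refine ⟨hX𝒳, Finset.union_subset hWX fun v hv => ?_⟩
    exact (Finset.mem_filter.mp heX).2 v (mem_eFS.mp hv)
  -- it suffices to bound the total overcount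
  set B0 : ℤ := (Nat.choose k 2 : ℤ) * ((t : ℤ) - 1) with hB0
  set B1 : ℤ := ∑ U ∈ (theta V 𝒳 (k + 1)).filter (fun X => W ⊂ X), ((degX 𝒳 U : ℤ) - 1) with hB1
  set B2 : ℤ := ∑ U ∈ (theta V 𝒳 (k + 2)).filter (fun X => W ⊂ X), ((degX 𝒳 U : ℤ) - 1) with hB2
  have hrep : ∀ e ∈ ℰ, ∃ a b : α, a ≠ b ∧ e = s(a,b) := by
    intro e he
    have hnd : ¬ e.IsDiag := (hval e (hEsub e he)).1
    induction e using Sym2.ind with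
    | _ a b => exact ⟨a, b, fun h => hnd (Sym2.mk_isDiag_iff.mpr h), rfl⟩
  have hVert : ∀ e ∈ ℰ, ∀ v ∈ e, v ∈ V := fun e he => (hval e (hEsub e he)).2
  have key : ∑ e ∈ ℰ, ((m e : ℤ) - 1) ≤ B0 + (k : ℤ) * B1 + B2 := by
    -- restrict to edges counted at least twice
    have hsplit1 : ∑ e ∈ ℰ, ((m e : ℤ) - 1)
        = ∑ e ∈ ℰ.filter (fun e => 2 ≤ m e), ((m e : ℤ) - 1) := by
      rw [← Finset.sum_filter_add_sum_filter_not ℰ (fun e => 2 ≤ m e)]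
      have hz : ∑ e ∈ ℰ.filter (fun e => ¬ 2 ≤ m e), ((m e : ℤ) - 1) = 0 := by
        refine Finset.sum_eq_zero fun e he => ?_
        rw [Finset.mem_filter] at he
        have h1 := hm1 e he.1
        have : m e = 1 := by omega
        rw [this]; norm_num
      rw [hz, add_zero]
    rw [hsplit1]
    set ℰ' := ℰ.filter (fun e => 2 ≤ m e) with hE'def
    have hE'sub : ℰ' ⊆ ℰ := Finset.filter_subset _ _
    -- split by position of endpoints relative to W
    rw [← Finset.sum_filter_add_sum_filter_not ℰ' (fun e => ∀ v ∈ e, v ∈ W)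
      (fun e => (m e : ℤ) - 1),
      ← Finset.sum_filter_add_sum_filter_not (ℰ'.filter (fun e => ¬ ∀ v ∈ e, v ∈ W))
      (fun e => ∀ v ∈ e, v ∉ W) (fun e => (m e : ℤ) - 1)]
    set E0 := ℰ'.filter (fun e => ∀ v ∈ e, v ∈ W) with hE0def
    set E2 := (ℰ'.filter (fun e => ¬ ∀ v ∈ e, v ∈ W)).filter (fun e => ∀ v ∈ e, v ∉ W)
      with hE2def
    set E1 := (ℰ'.filter (fun e => ¬ ∀ v ∈ e, v ∈ W)).filter (fun e => ¬ ∀ v ∈ e, v ∉ W)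
      with hE1def
    have ht2 : 2 ≤ t := ht ▸ hWdeg
    -- Bound 0
    have hbound0 : ∑ e ∈ E0, ((m e : ℤ) - 1) ≤ B0 := by
      have hterm : ∀ e ∈ E0, ((m e : ℤ) - 1) ≤ (t : ℤ) - 1 := by
        intro e he
        have : m e ≤ S.card := Finset.card_le_card (Finset.filter_subset _ _)
        rw [← htS] at this
        have : (m e : ℤ) ≤ (t : ℤ) := by exact_mod_cast this
        linarith
      have hcardE0 : E0.card ≤ Nat.choose k 2 := by
        have hsub : E0 ⊆ W.offDiag.image Sym2.mk.uncurry := by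
          intro e he
          rw [hE0def, Finset.mem_filter] at he
          obtain ⟨he', hp0⟩ := he
          obtain ⟨a, b, hab, rfl⟩ := hrep e (hE'sub he')
          have ha : a ∈ W := hp0 a (Sym2.mem_mk_left a b)
          have hb : b ∈ W := hp0 b (Sym2.mem_mk_right a b)
          exact Finset.mem_image.mpr ⟨(a, b), Finset.mem_offDiag.mpr ⟨ha, hb, hab⟩, rfl⟩
        calc E0.card ≤ (W.offDiag.image Sym2.mk.uncurry).card := Finset.card_le_card hsub
          _ = W.card.choose 2 := Sym2.card_image_offDiag W
          _ = Nat.choose k 2 := by rw [hWcard]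
      calc ∑ e ∈ E0, ((m e : ℤ) - 1) ≤ E0.card • ((t : ℤ) - 1) :=
            Finset.sum_le_card_nsmul _ _ _ hterm
        _ = (E0.card : ℤ) * ((t : ℤ) - 1) := nsmul_eq_mul _ _
        _ ≤ (Nat.choose k 2 : ℤ) * ((t : ℤ) - 1) := by
            have h1 : (E0.card : ℤ) ≤ (Nat.choose k 2 : ℤ) := by exact_mod_cast hcardE0
            have h2 : (0 : ℤ) ≤ (t : ℤ) - 1 := by
              have : (2 : ℤ) ≤ (t : ℤ) := by exact_mod_cast ht2
              linarith
            exact mul_le_mul_of_nonneg_right h1 h2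
        _ = B0 := rfl
    -- generic facts for the hinge bounds
    have hdeg2 : ∀ e ∈ ℰ', 2 ≤ degX 𝒳 (W ∪ eFS e) := by
      intro e he
      rw [hE'def, Finset.mem_filter] at he
      exact le_trans he.2 (hmd e he.1)
    -- Bound 1
    have hbound1 : ∑ e ∈ E1, ((m e : ℤ) - 1) ≤ (k : ℤ) * B1 := by
      set T1 := (theta V 𝒳 (k + 1)).filter (fun X => W ⊂ X) with hT1def
      have hmaps : ∀ e ∈ E1, W ∪ eFS e ∈ T1 := by
        intro e he
        rw [hE1def, Finset.mem_filter, Finset.mem_filter] at he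
        obtain ⟨⟨he', hnp0⟩, hnp2⟩ := he
        obtain ⟨a, b, haW, hbW, rfl⟩ := exists_rep_mixed e hnp0 hnp2
        have hgeq : W ∪ eFS s(a,b) = insert b W := by
          ext v
          simp only [Finset.mem_union, eFS_mk, Finset.mem_insert, Finset.mem_singleton]
          constructor
          · rintro (h | rfl | rfl) <;> simp [*]
          · rintro (rfl | h) <;> simp [*]
        rw [hgeq]
        have hbV : b ∈ V := hVert _ (hE'sub he') b (Sym2.mem_mk_right a b)
        rw [hT1def, Finset.mem_filter]
        constructor
        · simp only [theta, Finset.mem_filter, Finset.mem_powerset]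
          refine ⟨Finset.insert_subset hbV hWV, ?_, ?_⟩
          · rw [Finset.card_insert_of_notMem hbW, hWcard]
          · have := hdeg2 _ he'
            rwa [hgeq] at this
        · exact Finset.ssubset_insert hbW
      rw [← Finset.sum_fiberwise_of_maps_to hmaps (fun e => (m e : ℤ) - 1)]
      have hfiber : ∀ U ∈ T1,
          ∑ e ∈ E1.filter (fun e => W ∪ eFS e = U), ((m e : ℤ) - 1)
            ≤ (k : ℤ) * ((degX 𝒳 U : ℤ) - 1) := by
        intro U hU
        rw [hT1def, Finset.mem_filter] at hU
        obtain ⟨hUtheta, hWU⟩ := hU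
        simp only [theta, Finset.mem_filter, Finset.mem_powerset] at hUtheta
        obtain ⟨hUV, hUcard, hUdeg⟩ := hUtheta
        have hterm : ∀ e ∈ E1.filter (fun e => W ∪ eFS e = U),
            ((m e : ℤ) - 1) ≤ (degX 𝒳 U : ℤ) - 1 := by
          intro e he
          rw [Finset.mem_filter] at he
          have h1 : m e ≤ degX 𝒳 U := by
            rw [← he.2]
            exact hmd e (hE'sub (Finset.mem_filter.mp (Finset.mem_filter.mp he.1).1).1)
          have : (m e : ℤ) ≤ (degX 𝒳 U : ℤ) := by exact_mod_cast h1
          linarith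
        have hfc : (E1.filter (fun e => W ∪ eFS e = U)).card ≤ k := by
          have hsub : E1.filter (fun e => W ∪ eFS e = U)
              ⊆ (U \ W).biUnion (fun u => W.image (fun w => s(w, u))) := by
            intro e he
            rw [Finset.mem_filter] at he
            obtain ⟨he1, hgeU⟩ := he
            rw [hE1def, Finset.mem_filter, Finset.mem_filter] at he1
            obtain ⟨⟨he', hnp0⟩, hnp2⟩ := he1
            obtain ⟨a, b, haW, hbW, rfl⟩ := exists_rep_mixed e hnp0 hnp2
            have hbU : b ∈ U := by
              rw [← hgeU]
              exact Finset.mem_union_right _ (by simp [eFS_mk])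
            refine Finset.mem_biUnion.mpr ⟨b, Finset.mem_sdiff.mpr ⟨hbU, hbW⟩, ?_⟩
            exact Finset.mem_image.mpr ⟨a, haW, rfl⟩
          have hcardUW : (U \ W).card = 1 := by
            rw [Finset.card_sdiff_of_subset hWU.subset, hUcard, hWcard]
            omega
          calc (E1.filter (fun e => W ∪ eFS e = U)).card
              ≤ ((U \ W).biUnion (fun u => W.image (fun w => s(w, u)))).card :=
                Finset.card_le_card hsub
            _ ≤ ∑ u ∈ U \ W, (W.image (fun w => s(w, u))).card := Finset.card_biUnion_le
            _ ≤ ∑ u ∈ U \ W, k := by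
                refine Finset.sum_le_sum fun u _ => ?_
                calc (W.image (fun w => s(w, u))).card ≤ W.card := Finset.card_image_le
                  _ = k := hWcard
            _ = k := by rw [Finset.sum_const, hcardUW, one_smul]
        calc ∑ e ∈ E1.filter (fun e => W ∪ eFS e = U), ((m e : ℤ) - 1)
            ≤ (E1.filter (fun e => W ∪ eFS e = U)).card • ((degX 𝒳 U : ℤ) - 1) :=
              Finset.sum_le_card_nsmul _ _ _ hterm
          _ = ((E1.filter (fun e => W ∪ eFS e = U)).card : ℤ) * ((degX 𝒳 U : ℤ) - 1) :=
              nsmul_eq_mul _ _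
          _ ≤ (k : ℤ) * ((degX 𝒳 U : ℤ) - 1) := by
              have h1 : ((E1.filter (fun e => W ∪ eFS e = U)).card : ℤ) ≤ (k : ℤ) := by
                exact_mod_cast hfc
              have h2 : (0 : ℤ) ≤ (degX 𝒳 U : ℤ) - 1 := by
                have : (2 : ℤ) ≤ (degX 𝒳 U : ℤ) := by exact_mod_cast hUdeg
                linarith
              exact mul_le_mul_of_nonneg_right h1 h2
      calc ∑ U ∈ T1, ∑ e ∈ E1.filter (fun e => W ∪ eFS e = U), ((m e : ℤ) - 1)
          ≤ ∑ U ∈ T1, (k : ℤ) * ((degX 𝒳 U : ℤ) - 1) := Finset.sum_le_sum hfiber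
        _ = (k : ℤ) * B1 := by rw [hB1, Finset.mul_sum]
    -- Bound 2
    have hbound2 : ∑ e ∈ E2, ((m e : ℤ) - 1) ≤ B2 := by
      set T2 := (theta V 𝒳 (k + 2)).filter (fun X => W ⊂ X) with hT2def
      have hrep2 : ∀ e ∈ E2, ∃ a b : α, a ≠ b ∧ a ∉ W ∧ b ∉ W ∧ e = s(a,b) := by
        intro e he
        rw [hE2def, Finset.mem_filter, Finset.mem_filter] at he
        obtain ⟨⟨he', _⟩, hp2⟩ := he
        obtain ⟨a, b, hab, rfl⟩ := hrep e (hE'sub he')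
        exact ⟨a, b, hab, hp2 a (Sym2.mem_mk_left a b), hp2 b (Sym2.mem_mk_right a b), rfl⟩
      have hE2sub : ∀ e ∈ E2, e ∈ ℰ' := by
        intro e he
        rw [hE2def, Finset.mem_filter, Finset.mem_filter] at he
        exact he.1.1
      have hmaps : ∀ e ∈ E2, W ∪ eFS e ∈ T2 := by
        intro e he
        obtain ⟨a, b, hab, haW, hbW, rfl⟩ := hrep2 e he
        have he' := hE2sub _ he
        have haV : a ∈ V := hVert _ (hE'sub he') a (Sym2.mem_mk_left a b)
        have hbV : b ∈ V := hVert _ (hE'sub he') b (Sym2.mem_mk_right a b)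
        rw [hT2def, Finset.mem_filter]
        have hcardU : (W ∪ eFS s(a,b)).card = k + 2 := by
          have h1 : W ∪ eFS s(a,b) = insert a (insert b W) := by
            ext v
            simp only [Finset.mem_union, eFS_mk, Finset.mem_insert, Finset.mem_singleton]
            tauto
          rw [h1, Finset.card_insert_of_notMem (by simp [hab, haW]),
            Finset.card_insert_of_notMem hbW, hWcard]
        constructor
        · simp only [theta, Finset.mem_filter, Finset.mem_powerset]
          refine ⟨Finset.union_subset hWV ?_, hcardU, hdeg2 _ he'⟩
          intro v hv
          simp only [eFS_mk, Finset.mem_insert, Finset.mem_singleton] at hv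
          rcases hv with rfl | rfl
          · exact haV
          · exact hbV
        · refine Finset.ssubset_iff_of_subset (Finset.subset_union_left) |>.mpr ?_
          exact ⟨b, Finset.mem_union_right _ (by simp [eFS_mk]), hbW⟩
      rw [← Finset.sum_fiberwise_of_maps_to hmaps (fun e => (m e : ℤ) - 1)]
      have hfiber : ∀ U ∈ T2,
          ∑ e ∈ E2.filter (fun e => W ∪ eFS e = U), ((m e : ℤ) - 1)
            ≤ (degX 𝒳 U : ℤ) - 1 := by
        intro U hU
        rw [hT2def, Finset.mem_filter] at hU
        obtain ⟨hUtheta, hWU⟩ := hU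
        simp only [theta, Finset.mem_filter, Finset.mem_powerset] at hUtheta
        obtain ⟨hUV, hUcard, hUdeg⟩ := hUtheta
        have hterm : ∀ e ∈ E2.filter (fun e => W ∪ eFS e = U),
            ((m e : ℤ) - 1) ≤ (degX 𝒳 U : ℤ) - 1 := by
          intro e he
          rw [Finset.mem_filter] at he
          have h1 : m e ≤ degX 𝒳 U := by
            rw [← he.2]
            exact hmd e (hE'sub (hE2sub _ he.1))
          have : (m e : ℤ) ≤ (degX 𝒳 U : ℤ) := by exact_mod_cast h1
          linarith
        have hfc : (E2.filter (fun e => W ∪ eFS e = U)).card ≤ 1 := by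
          rw [Finset.card_le_one]
          intro e he f hf
          rw [Finset.mem_filter] at he hf
          obtain ⟨a, b, hab, haW, hbW, rfl⟩ := hrep2 e he.1
          obtain ⟨c, dd, hcd, hcW, hdW, rfl⟩ := hrep2 f hf.1
          have hpair : ({a, b} : Finset α) = {c, dd} := by
            have h1 : ({a, b} : Finset α) = U \ W := by
              ext v
              simp only [Finset.mem_insert, Finset.mem_singleton, Finset.mem_sdiff]
              constructor
              · rintro (rfl | rfl)
                · exact ⟨by rw [← he.2]; exact Finset.mem_union_right _ (by simp [eFS_mk]), haW⟩
                · exact ⟨by rw [← he.2]; exact Finset.mem_union_right _ (by simp [eFS_mk]), hbW⟩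
              · rintro ⟨hvU, hvW⟩
                rw [← he.2] at hvU
                rcases Finset.mem_union.mp hvU with h | h
                · exact absurd h hvW
                · simpa [eFS_mk] using h
            have h2 : ({c, dd} : Finset α) = U \ W := by
              ext v
              simp only [Finset.mem_insert, Finset.mem_singleton, Finset.mem_sdiff]
              constructor
              · rintro (rfl | rfl)
                · exact ⟨by rw [← hf.2]; exact Finset.mem_union_right _ (by simp [eFS_mk]), hcW⟩
                · exact ⟨by rw [← hf.2]; exact Finset.mem_union_right _ (by simp [eFS_mk]), hdW⟩
              · rintro ⟨hvU, hvW⟩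
                rw [← hf.2] at hvU
                rcases Finset.mem_union.mp hvU with h | h
                · exact absurd h hvW
                · simpa [eFS_mk] using h
            rw [h1, h2]
          exact pair_eq_sym2 hab hpair
        calc ∑ e ∈ E2.filter (fun e => W ∪ eFS e = U), ((m e : ℤ) - 1)
            ≤ (E2.filter (fun e => W ∪ eFS e = U)).card • ((degX 𝒳 U : ℤ) - 1) :=
              Finset.sum_le_card_nsmul _ _ _ hterm
          _ = ((E2.filter (fun e => W ∪ eFS e = U)).card : ℤ) * ((degX 𝒳 U : ℤ) - 1) :=
              nsmul_eq_mul _ _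
          _ ≤ 1 * ((degX 𝒳 U : ℤ) - 1) := by
              have h1 : ((E2.filter (fun e => W ∪ eFS e = U)).card : ℤ) ≤ 1 := by
                exact_mod_cast hfc
              have h2 : (0 : ℤ) ≤ (degX 𝒳 U : ℤ) - 1 := by
                have : (2 : ℤ) ≤ (degX 𝒳 U : ℤ) := by exact_mod_cast hUdeg
                linarith
              exact mul_le_mul_of_nonneg_right h1 h2
          _ = (degX 𝒳 U : ℤ) - 1 := one_mul _
      calc ∑ U ∈ T2, ∑ e ∈ E2.filter (fun e => W ∪ eFS e = U), ((m e : ℤ) - 1)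
          ≤ ∑ U ∈ T2, ((degX 𝒳 U : ℤ) - 1) := Finset.sum_le_sum hfiber
        _ = B2 := rfl
    linarith [hbound0, hbound1, hbound2]
  have hsum : ∑ X ∈ S, (iG E X : ℤ) = ∑ e ∈ ℰ, (m e : ℤ) := by
    exact_mod_cast congrArg (Nat.cast : ℕ → ℤ) hcount
  have hcard : (ℰ.card : ℤ) = ∑ e ∈ ℰ, (1 : ℤ) := by simp
  have : ∑ e ∈ ℰ, ((m e : ℤ) - 1) = ∑ e ∈ ℰ, (m e : ℤ) - ℰ.card := by
    rw [Finset.sum_sub_distrib, hcard]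
  linarith [key, hsum, this]
end
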